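/- arXiv:math/0702216 — 6 statements merged into one kernel-verified Lean document; each statement's English description precedes it below -/
import Mathlib

section
/- Let {e_i}_{i∈ℕ} be an orthonormal basis of a Hilbert space H and define f_i = (e_i + e_{i+1})/√2. Then there exists ε₀ > 0 such that for all 0 < ε < ε₀, the sequence {f_i}_{i∈ℕ} is not an ε-perturbation of any sequence possessing a finite orthogonal decomposition; i.e., there is no sequence {g_i}_{i∈ℕ} with Σ_i ‖f_i − g_i‖² ≤ ε that admits a partition of ℕ into finite sets whose spans under {g_i} are mutually orthogonal. -/
open scoped InnerProductSpace
open Submodule Topology TopologicalSpace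

noncomputable section

variable {H : Type} [NormedAddCommGroup H] [InnerProductSpace ℂ H] [CompleteSpace H]

/-- `f` is a Bessel sequence with bound `B`. -/
def IsBessel {H : Type} [NormedAddCommGroup H] [InnerProductSpace ℂ H]
    {I : Type} (f : I → H) (B : ℝ) : Prop :=
  ∀ g : H, ∀ s : Finset I, ∑ i ∈ s, ‖⟪g, f i⟫_ℂ‖ ^ 2 ≤ B * ‖g‖ ^ 2

/-- `f` is a Riesz basic sequence (a Riesz basis for its closed span). -/
def IsRieszBasic {H : Type} [NormedAddCommGroup H] [InnerProductSpace ℂ H]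
    {I : Type} (f : I → H) : Prop :=
  ∃ A B : ℝ, 0 < A ∧ A ≤ B ∧ ∀ c : I → ℂ, Summable (fun i => ‖c i‖ ^ 2) →
    ∃ v : H, HasSum (fun i => c i • f i) v ∧
      A * ∑' i, ‖c i‖ ^ 2 ≤ ‖v‖ ^ 2 ∧ ‖v‖ ^ 2 ≤ B * ∑' i, ‖c i‖ ^ 2

/-- `f` is a frame for its closed linear span. -/
def IsFrameSequence {H : Type} [NormedAddCommGroup H] [InnerProductSpace ℂ H]
    {I : Type} (f : I → H) : Prop :=
  ∃ A B : ℝ, 0 < A ∧ A ≤ B ∧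
    ∀ g ∈ closure ((span ℂ (Set.range f) : Submodule ℂ H) : Set H),
      Summable (fun i => ‖⟪g, f i⟫_ℂ‖ ^ 2) ∧
      A * ‖g‖ ^ 2 ≤ ∑' i, ‖⟪g, f i⟫_ℂ‖ ^ 2 ∧
      ∑' i, ‖⟪g, f i⟫_ℂ‖ ^ 2 ≤ B * ‖g‖ ^ 2

/-- `f` is ω-independent for ℓ₂-sequences. -/
def IsOmegaIndep {H : Type} [NormedAddCommGroup H] [InnerProductSpace ℂ H]
    {I : Type} (f : I → H) : Prop :=
  ∀ c : I → ℂ, Summable (fun i => ‖c i‖ ^ 2) →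
    HasSum (fun i => c i • f i) 0 → ∀ i, c i = 0

/-- `g` possesses a finite orthogonal decomposition: the index set partitions into
finite sets whose spans are mutually orthogonal. -/
def HasFiniteOrthDecomp {H : Type} [NormedAddCommGroup H] [InnerProductSpace ℂ H]
    {I : Type} (g : I → H) : Prop :=
  ∃ P : ℕ → Set I, (∀ i, ∃! j, i ∈ P j) ∧ (∀ j, (P j).Finite) ∧
    ∀ j k, j ≠ k → ∀ x ∈ span ℂ (g '' P j), ∀ y ∈ span ℂ (g '' P k), ⟪x, y⟫_ℂ = 0

theorem stmt3 (e : ℕ → H) (he : Orthonormal ℂ e)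
    (hspan : closure ((span ℂ (Set.range e) : Submodule ℂ H) : Set H) = Set.univ)
    (f : ℕ → H) (hf : ∀ i, f i = ((Real.sqrt 2 : ℂ))⁻¹ • (e i + e (i + 1))) :
    ∃ ε₀ > 0, ∀ ε : ℝ, 0 < ε → ε < ε₀ →
      ¬ ∃ g : ℕ → H,
          (∀ i, g i ∈ closure ((span ℂ (Set.range f) : Submodule ℂ H) : Set H)) ∧
          Summable (fun i => ‖f i - g i‖ ^ 2) ∧
          (∑' i, ‖f i - g i‖ ^ 2) ≤ ε ∧
          HasFiniteOrthDecomp g := by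
  refine ⟨1/100, by norm_num, fun ε hε hε' => ?_⟩
  rintro ⟨g, -, hsum, htsum, P, huniq, hfin, horth⟩
  have hee := orthonormal_iff_ite.mp he
  have hnf : ∀ i, ‖f i‖ = 1 := by
    intro i
    have h2 : ‖f i‖ ^ 2 = 1 := by
      rw [hf i, norm_smul, mul_pow, norm_add_sq (𝕜 := ℂ)]
      simp [hee, he.1]
      norm_num
    rw [← Real.sqrt_sq (norm_nonneg (f i)), h2, Real.sqrt_one]
  have hip : ∀ i, ⟪f i, f (i+1)⟫_ℂ = 1/2 := by
    intro i
    rw [hf i, hf (i+1), inner_smul_left, inner_smul_right, inner_add_left,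
      inner_add_right, inner_add_right]
    simp [hee]
    rw [if_neg (by omega : ¬ i = i + 1 + 1), zero_add, he.1 (i+1), Complex.ofReal_one, one_pow, mul_one, ← mul_inv,
      ← Complex.ofReal_mul, Real.mul_self_sqrt (by norm_num : (0:ℝ) ≤ 2)]
    norm_num
  have hterm : ∀ i, ‖f i - g i‖ < 1/10 := by
    intro i
    have h1 : ‖f i - g i‖ ^ 2 ≤ ε :=
      le_trans (Summable.le_tsum hsum i fun j _ => sq_nonneg _) htsum
    have h2 : ‖f i - g i‖ ^ 2 < (1/10 : ℝ) ^ 2 := by nlinarith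
    exact lt_of_pow_lt_pow_left₀ 2 (by norm_num) h2
  have hg : ∀ i, ‖g i‖ ≤ 11/10 := by
    intro i
    have h1 : ‖g i‖ ≤ ‖f i - g i‖ + ‖f i‖ := by
      simpa [norm_sub_rev] using norm_add_le (g i - f i) (f i)
    have := hterm i
    rw [hnf i] at h1
    linarith
  have hne : ∀ i, ⟪g i, g (i+1)⟫_ℂ ≠ 0 := by
    intro i h0
    have hdiff : ⟪g i, g (i+1)⟫_ℂ - ⟪f i, f (i+1)⟫_ℂ
        = ⟪g i - f i, g (i+1)⟫_ℂ + ⟪f i, g (i+1) - f (i+1)⟫_ℂ := by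
      rw [inner_sub_left, inner_sub_right]; ring
    have hb : ‖⟪g i, g (i+1)⟫_ℂ - ⟪f i, f (i+1)⟫_ℂ‖ ≤ 21/100 := by
      rw [hdiff]
      calc ‖⟪g i - f i, g (i+1)⟫_ℂ + ⟪f i, g (i+1) - f (i+1)⟫_ℂ‖
          ≤ ‖⟪g i - f i, g (i+1)⟫_ℂ‖ + ‖⟪f i, g (i+1) - f (i+1)⟫_ℂ‖ := norm_add_le _ _
        _ ≤ ‖g i - f i‖ * ‖g (i+1)‖ + ‖f i‖ * ‖g (i+1) - f (i+1)‖ :=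
            add_le_add (norm_inner_le_norm _ _) (norm_inner_le_norm _ _)
        _ ≤ (1/10) * (11/10) + 1 * (1/10) := by
            have h1 := hterm i
            have h2 := hterm (i+1)
            have h3 := hg (i+1)
            rw [norm_sub_rev (g i), norm_sub_rev (g (i+1)), hnf i]
            have := norm_nonneg (f i - g i)
            have := norm_nonneg (f (i+1) - g (i+1))
            nlinarith
        _ ≤ 21/100 := by norm_num
    rw [h0, hip i, zero_sub, norm_neg] at hb
    have : ‖(1/2 : ℂ)‖ = 1/2 := by
      rw [show (1/2 : ℂ) = ((1/2 : ℝ) : ℂ) by norm_num, Complex.norm_real]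
      norm_num
    rw [this] at hb
    norm_num at hb
  choose jm hmem hun using huniq
  have hstep : ∀ i, jm (i+1) = jm i := by
    intro i
    by_contra hne'
    exact hne i (horth (jm i) (jm (i+1)) (fun h => hne' h.symm) (g i)
      (subset_span ⟨i, hmem i, rfl⟩) (g (i+1)) (subset_span ⟨i+1, hmem (i+1), rfl⟩))
  have hconst : ∀ i, jm i = jm 0 := by
    intro i
    induction i with
    | zero => rfl
    | succ n ih => rw [hstep n, ih]
  have hinf : (P (jm 0)).Infinite :=
    Set.infinite_of_injective_forall_mem (f := (id : ℕ → ℕ)) Function.injective_id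
      (fun i => by rw [← hconst i]; exact hmem i)
  exact hinf (hfin _)
end
end

section
/- Let {e_i} be an orthonormal basis of a Hilbert space H, let ε > 0 be small, and suppose ℕ is partitioned into finite sets {I_j}_{j=1}^∞. Let i₀ ∈ ℕ be such that i₀ ∈ I_j and i₀+1 ∈ I_k with j ≠ k. If f_i = (e_i + e_{i+1})/√2 and {g_i} satisfies ‖f_{i₀} − g_{i₀}‖ < √ε, ‖f_{i₀+1} − g_{i₀+1}‖ < √ε, and g_{i₀} ⊥ g_{i₀+1}, then √2(1 − √ε) ≤ 1 + 2√ε; in particular, such g cannot exist when ε is small enough that √2(1 − √ε) > 1 + 2√ε. -/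
open scoped InnerProductSpace
open Submodule Topology TopologicalSpace

noncomputable section

variable {H : Type} [NormedAddCommGroup H] [InnerProductSpace ℂ H] [CompleteSpace H]

theorem stmt4 (e : ℕ → H) (he : Orthonormal ℂ e) (ε : ℝ) (hε : 0 < ε)
    (Pa : ℕ → Set ℕ) (hpart : ∀ i, ∃! j, i ∈ Pa j) (hfin : ∀ j, (Pa j).Finite)
    (i₀ j k : ℕ) (hij : i₀ ∈ Pa j) (hik : i₀ + 1 ∈ Pa k) (hjk : j ≠ k)
    (f g : ℕ → H) (hf : ∀ i, f i = ((Real.sqrt 2 : ℂ))⁻¹ • (e i + e (i + 1)))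
    (h1 : ‖f i₀ - g i₀‖ < Real.sqrt ε)
    (h2 : ‖f (i₀ + 1) - g (i₀ + 1)‖ < Real.sqrt ε)
    (horth : ⟪g i₀, g (i₀ + 1)⟫_ℂ = 0) :
    Real.sqrt 2 * (1 - Real.sqrt ε) ≤ 1 + 2 * Real.sqrt ε := by
  set s := Real.sqrt ε with hs
  have hs0 : 0 ≤ s := Real.sqrt_nonneg ε
  have h2s : Real.sqrt 2 ^ 2 = 2 := Real.sq_sqrt (by norm_num)
  have h2pos : (0:ℝ) < Real.sqrt 2 := Real.sqrt_pos.mpr (by norm_num)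
  -- norm of e i + e j and e i - e j for i ≠ j
  have hinner : ∀ i j2 : ℕ, i ≠ j2 → ⟪e i, e j2⟫_ℂ = 0 := fun i j2 h => he.2 h
  have hne : ∀ i : ℕ, ‖e i‖ = 1 := fun i => he.1 i
  -- ‖f i‖ = 1
  have hfi : ∀ i, ‖f i‖ = 1 := by
    intro i
    rw [hf i, norm_smul]
    have hadd : ‖e i + e (i+1)‖ ^ 2 = 2 := by
      rw [@norm_add_sq ℂ]
      rw [hinner i (i+1) (by omega), hne i, hne (i+1)]
      norm_num
    have : ‖e i + e (i+1)‖ = Real.sqrt 2 := by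
      have h0 : 0 ≤ ‖e i + e (i+1)‖ := norm_nonneg _
      nlinarith [Real.sqrt_nonneg 2]
    rw [this]
    have : ‖((Real.sqrt 2 : ℂ))⁻¹‖ = (Real.sqrt 2)⁻¹ := by
      simp [norm_inv, Complex.norm_real, Real.norm_eq_abs, abs_of_nonneg (Real.sqrt_nonneg 2)]
    rw [this]
    field_simp
  -- ‖f i₀ - f (i₀+1)‖ = 1
  have hff : ‖f i₀ - f (i₀+1)‖ = 1 := by
    have heq : f i₀ - f (i₀+1) = ((Real.sqrt 2 : ℂ))⁻¹ • (e i₀ - e (i₀+2)) := by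
      rw [hf i₀, hf (i₀+1), ← smul_sub]
      congr 1
      abel_nf
      norm_num
    rw [heq, norm_smul]
    have hsub : ‖e i₀ - e (i₀+2)‖ ^ 2 = 2 := by
      rw [@norm_sub_sq ℂ]
      rw [hinner i₀ (i₀+2) (by omega), hne i₀, hne (i₀+2)]
      norm_num
    have : ‖e i₀ - e (i₀+2)‖ = Real.sqrt 2 := by
      have h0 : 0 ≤ ‖e i₀ - e (i₀+2)‖ := norm_nonneg _
      nlinarith [Real.sqrt_nonneg 2]
    rw [this]
    have : ‖((Real.sqrt 2 : ℂ))⁻¹‖ = (Real.sqrt 2)⁻¹ := by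
      simp [norm_inv, Complex.norm_real, Real.norm_eq_abs, abs_of_nonneg (Real.sqrt_nonneg 2)]
    rw [this]
    field_simp
  set a := ‖g i₀‖ with ha
  set b := ‖g (i₀+1)‖ with hb
  have ha0 : 0 ≤ a := norm_nonneg _
  have hb0 : 0 ≤ b := norm_nonneg _
  -- lower bounds on a, b
  have hal : 1 - s ≤ a := by
    have := norm_sub_norm_le (f i₀) (g i₀)
    rw [hfi i₀] at this
    linarith
  have hbl : 1 - s ≤ b := by
    have := norm_sub_norm_le (f (i₀+1)) (g (i₀+1))
    rw [hfi (i₀+1)] at this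
    linarith
  -- orthogonality: ‖g i₀ - g (i₀+1)‖² = a² + b²
  have hgg : ‖g i₀ - g (i₀+1)‖ ^ 2 = a ^ 2 + b ^ 2 := by
    rw [@norm_sub_sq ℂ, horth]
    simp [ha, hb]
  -- upper bound on ‖g i₀ - g (i₀+1)‖
  have hub : ‖g i₀ - g (i₀+1)‖ ≤ 1 + 2 * s := by
    have h3 : ‖g i₀ - g (i₀+1)‖ ≤ ‖g i₀ - f i₀‖ + ‖f i₀ - f (i₀+1)‖ + ‖f (i₀+1) - g (i₀+1)‖ := by
      calc ‖g i₀ - g (i₀+1)‖ = ‖(g i₀ - f i₀) + (f i₀ - f (i₀+1)) + (f (i₀+1) - g (i₀+1))‖ := by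
            congr 1; abel
        _ ≤ _ := norm_add₃_le
    rw [hff, norm_sub_rev (g i₀) (f i₀)] at h3
    linarith
  have hub2 : a ^ 2 + b ^ 2 ≤ (1 + 2 * s) ^ 2 := by
    rw [← hgg]
    have h0 : 0 ≤ ‖g i₀ - g (i₀+1)‖ := norm_nonneg _
    nlinarith
  by_cases hc : 1 - s ≤ 0
  · nlinarith
  · push_neg at hc
    nlinarith [sq_nonneg (Real.sqrt 2 * (1 - s) - (1 + 2 * s)), sq_nonneg (a - b),
      mul_le_mul hal hal (by linarith) ha0]
end
end

section
/- Every unit norm Bessel sequence which is finitely linearly independent (every finite subfamily is linearly independent) can be partitioned into two subsets each of which is ω-independent for ℓ₂-sequences. -/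
open scoped InnerProductSpace
open Submodule Topology TopologicalSpace

noncomputable section

variable {H : Type} [NormedAddCommGroup H] [InnerProductSpace ℂ H] [CompleteSpace H]

section OmegaIndepAux

open scoped ENNReal NNReal

variable {I : Type}

private lemma bessel_finset_bound (f : I → H) {B : ℝ} (hB : IsBessel f B) (hB0 : 0 ≤ B)
    (c : I → ℂ) (s : Finset I) :
    ‖∑ i ∈ s, c i • f i‖ ^ 2 ≤ B * ∑ i ∈ s, ‖c i‖ ^ 2 := by
  set v := ∑ i ∈ s, c i • f i with hv
  have h1 : (‖v‖ : ℝ) ^ 2 = ‖⟪v, v⟫_ℂ‖ := by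
    rw [inner_self_eq_norm_sq_to_K]
    rw [norm_pow]; norm_num
  have h2 : ⟪v, v⟫_ℂ = ∑ i ∈ s, c i * ⟪v, f i⟫_ℂ := by
    rw [hv]
    rw [inner_sum]
    exact Finset.sum_congr rfl fun i _ => inner_smul_right _ _ _
  have h3 : ‖⟪v, v⟫_ℂ‖ ≤ ∑ i ∈ s, ‖c i‖ * ‖⟪v, f i⟫_ℂ‖ := by
    rw [h2]
    refine (norm_sum_le _ _).trans (le_of_eq ?_)
    exact Finset.sum_congr rfl fun i _ => norm_mul _ _
  have h4 : (∑ i ∈ s, ‖c i‖ * ‖⟪v, f i⟫_ℂ‖) ^ 2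
      ≤ (∑ i ∈ s, ‖c i‖ ^ 2) * ∑ i ∈ s, ‖⟪v, f i⟫_ℂ‖ ^ 2 :=
    Finset.sum_mul_sq_le_sq_mul_sq s _ _
  have h5 : ∑ i ∈ s, ‖⟪v, f i⟫_ℂ‖ ^ 2 ≤ B * ‖v‖ ^ 2 := hB v s
  have hcs : (0:ℝ) ≤ ∑ i ∈ s, ‖c i‖ ^ 2 := by positivity
  rcases eq_or_lt_of_le (sq_nonneg ‖v‖) with h | h
  · nlinarith
  · nlinarith [h1, h3, h4, h5]

private lemma bessel_summable (f : I → H) {B : ℝ} (hB : IsBessel f B) (hB0 : 0 < B)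
    (c : I → ℂ) (hc : Summable fun i => ‖c i‖ ^ 2) :
    Summable fun i => c i • f i := by
  rw [summable_iff_vanishing_norm]
  intro ε hε
  obtain ⟨s, hs⟩ := summable_iff_vanishing_norm.1 hc (ε ^ 2 / B) (by positivity)
  refine ⟨s, fun t ht => ?_⟩
  have h1 : ‖∑ i ∈ t, c i • f i‖ ^ 2 ≤ B * ∑ i ∈ t, ‖c i‖ ^ 2 :=
    bessel_finset_bound f hB hB0.le c t
  have h2 : ‖∑ i ∈ t, ‖c i‖ ^ 2‖ < ε ^ 2 / B := hs t ht
  have h3 : ∑ i ∈ t, ‖c i‖ ^ 2 ≤ ‖∑ i ∈ t, ‖c i‖ ^ 2‖ := le_abs_self _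
  have h4 : B * (ε ^ 2 / B) = ε ^ 2 := by field_simp
  nlinarith [norm_nonneg (∑ i ∈ t, c i • f i), mul_lt_mul_of_pos_left h2 hB0]

private lemma lp_norm_sq (c : lp (fun _ : I => ℂ) 2) :
    ‖c‖ ^ 2 = ∑' i, ‖c i‖ ^ 2 := by
  have h := lp.norm_rpow_eq_tsum (p := 2) (E := fun _ : I => ℂ) (by norm_num) c
  have h2 : ((2 : ℝ≥0∞).toReal) = (2 : ℝ) := by norm_num
  rw [h2] at h
  calc ‖c‖ ^ 2 = ‖c‖ ^ (2:ℝ) := by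
        rw [← Real.rpow_natCast ‖c‖ 2]; norm_num
    _ = ∑' i, ‖c i‖ ^ (2:ℝ) := h
    _ = ∑' i, ‖c i‖ ^ 2 := by
        refine tsum_congr fun i => ?_
        rw [← Real.rpow_natCast ‖c i‖ 2]; norm_num

private lemma lp_summable_sq (c : lp (fun _ : I => ℂ) 2) :
    Summable fun i => ‖c i‖ ^ 2 := by
  have h := (lp.memℓp c).summable (p := 2) (by norm_num)
  have : (fun i => ‖c i‖ ^ ((2:ℝ≥0∞).toReal)) = fun i => ‖c i‖ ^ 2 := by
    funext i
    rw [show ((2 : ℝ≥0∞).toReal) = (2 : ℝ) by norm_num, ← Real.rpow_natCast ‖c i‖ 2]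
    norm_num
  rwa [this] at h

/-- The synthesis operator of a Bessel sequence. -/
private def synthesis (f : I → H) {B : ℝ} (hB : IsBessel f B) (hB0 : 0 < B) :
    lp (fun _ : I => ℂ) 2 →L[ℂ] H := by
  refine LinearMap.mkContinuous
    { toFun := fun c => ∑' i, c i • f i
      map_add' := ?_
      map_smul' := ?_ } (Real.sqrt B) ?_
  · intro c d
    have hc := bessel_summable f hB hB0 c (lp_summable_sq c)
    have hd := bessel_summable f hB hB0 d (lp_summable_sq d)
    have : (fun i => ((c + d) : lp _ 2) i • f i) = fun i => c i • f i + d i • f i := by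
      funext i
      rw [lp.coeFn_add]
      simp [add_smul]
    dsimp only
    rw [this, Summable.tsum_add hc hd]
  · intro a c
    have hc := bessel_summable f hB hB0 c (lp_summable_sq c)
    have : (fun i => ((a • c) : lp _ 2) i • f i) = fun i => a • (c i • f i) := by
      funext i
      rw [lp.coeFn_smul]
      simp [smul_smul]
    dsimp only
    simp only [RingHom.id_apply]
    rw [this]
    exact Summable.tsum_const_smul a hc
  · intro c
    dsimp only [LinearMap.coe_mk, AddHom.coe_mk]
    have hc := bessel_summable f hB hB0 c (lp_summable_sq c)
    have hb : ∀ s : Finset I, ‖∑ i ∈ s, c i • f i‖ ≤ Real.sqrt B * ‖c‖ := by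
      intro s
      have h1 := bessel_finset_bound f hB hB0.le c s
      have h2 : ∑ i ∈ s, ‖c i‖ ^ 2 ≤ ‖c‖ ^ 2 := by
        rw [lp_norm_sq]
        exact Summable.sum_le_tsum s (fun i _ => by positivity) (lp_summable_sq c)
      have h3 : ‖∑ i ∈ s, c i • f i‖ ^ 2 ≤ (Real.sqrt B * ‖c‖) ^ 2 := by
        rw [mul_pow, Real.sq_sqrt hB0.le]
        nlinarith
      have h4 := Real.sqrt_le_sqrt h3
      rwa [Real.sqrt_sq (norm_nonneg _), Real.sqrt_sq (by positivity)] at h4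
    exact le_of_tendsto' hc.hasSum.norm hb

private lemma synthesis_apply (f : I → H) {B : ℝ} (hB : IsBessel f B) (hB0 : 0 < B)
    (c : lp (fun _ : I => ℂ) 2) : synthesis f hB hB0 c = ∑' i, c i • f i := rfl

/-- Vanishing of the antilinear functional `⟪·, d⟫` on a span. -/
private lemma inner_left_eq_zero_of_span {E : Type} [NormedAddCommGroup E]
    [InnerProductSpace ℂ E]
    {s : Set E} {d : E} (h : ∀ v ∈ s, ⟪v, d⟫_ℂ = 0) {y : E} (hy : y ∈ span ℂ s) :
    ⟪y, d⟫_ℂ = 0 := by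
  induction hy using Submodule.span_induction with
  | mem v hv => exact h v hv
  | zero => simp
  | add u v hu hv hu' hv' => rw [inner_add_left, hu', hv', add_zero]
  | smul a v hv hv' => rw [inner_smul_left, hv', mul_zero]

private lemma abstract_partition {E : Type} [NormedAddCommGroup E] [InnerProductSpace ℂ E]
    {I : Type} [Countable I] [Nonempty I] (x : I → E)
    (happrox : ∀ S : Finset I, ∀ z : E, ∀ ε : ℝ, 0 < ε →
      ∃ G : Finset I, (∀ j ∈ G, j ∉ S) ∧ ∃ y ∈ span ℂ (x '' (G : Set I)), ‖z - y‖ < ε) :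
    ∃ A : Set I,
      (∀ d : E, (∀ i ∈ A, ⟪x i, d⟫_ℂ = 0) → ∀ i, ⟪x i, d⟫_ℂ = 0) ∧
      (∀ d : E, (∀ i ∈ Aᶜ, ⟪x i, d⟫_ℂ = 0) → ∀ i, ⟪x i, d⟫_ℂ = 0) := by
  classical
  have step : ∀ (F : Finset I × Finset I) (t : I × ℕ), ∃ F' : Finset I × Finset I,
      F.1 ⊆ F'.1 ∧ F.2 ⊆ F'.2 ∧ (Disjoint F.1 F.2 → Disjoint F'.1 F'.2) ∧
      (∃ y ∈ span ℂ (x '' ((F'.1 : Set I))), ‖x t.1 - y‖ < 1 / (t.2 + 1)) ∧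
      (∃ y ∈ span ℂ (x '' ((F'.2 : Set I))), ‖x t.1 - y‖ < 1 / (t.2 + 1)) := by
    intro F t
    obtain ⟨G₁, hG₁, y₁, hy₁, hy₁'⟩ :=
      happrox (F.1 ∪ F.2) (x t.1) (1 / (t.2 + 1)) (by positivity)
    obtain ⟨G₂, hG₂, y₂, hy₂, hy₂'⟩ :=
      happrox (F.1 ∪ F.2 ∪ G₁) (x t.1) (1 / (t.2 + 1)) (by positivity)
    refine ⟨(F.1 ∪ G₁, F.2 ∪ G₂), Finset.subset_union_left, Finset.subset_union_left,
      ?_, ?_, ?_⟩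
    · intro hd
      rw [Finset.disjoint_left]
      intro a ha hb
      rcases Finset.mem_union.1 ha with h | h
      · rcases Finset.mem_union.1 hb with h' | h'
        · exact Finset.disjoint_left.1 hd h h'
        · exact hG₂ a h' (by simp [h])
      · rcases Finset.mem_union.1 hb with h' | h'
        · exact hG₁ a h (by simp [h'])
        · exact hG₂ a h' (by simp [h])
    · exact ⟨y₁, Submodule.span_mono (Set.image_mono (by
        intro j hj; simpa using Or.inr (by exact_mod_cast hj))) hy₁, hy₁'⟩
    · exact ⟨y₂, Submodule.span_mono (Set.image_mono (by
        intro j hj; simpa using Or.inr (by exact_mod_cast hj))) hy₂, hy₂'⟩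
  choose stepF hsub1 hsub2 hdisj hy1 hy2 using step
  obtain ⟨e, he⟩ := exists_surjective_nat (I × ℕ)
  set st : ℕ → Finset I × Finset I :=
    fun n => Nat.rec ((∅ : Finset I), (∅ : Finset I)) (fun k F => stepF F (e k)) n with hst
  have st_succ : ∀ n, st (n + 1) = stepF (st n) (e n) := fun n => rfl
  have st_disj : ∀ n, Disjoint (st n).1 (st n).2 := by
    intro n
    induction n with
    | zero => simp [hst]
    | succ k ih => rw [st_succ]; exact hdisj _ _ ih
  have mono1 : ∀ {k n}, k ≤ n → (st k).1 ⊆ (st n).1 := by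
    intro k n h
    induction h with
    | refl => exact subset_rfl
    | step h ih => exact ih.trans (by rw [st_succ]; exact hsub1 _ _)
  have mono2 : ∀ {k n}, k ≤ n → (st k).2 ⊆ (st n).2 := by
    intro k n h
    induction h with
    | refl => exact subset_rfl
    | step h ih => exact ih.trans (by rw [st_succ]; exact hsub2 _ _)
  refine ⟨⋃ n, ((st n).2 : Set I), ?_, ?_⟩
  · intro d hd i₀
    have key : ∀ m : ℕ, ‖⟪x i₀, d⟫_ℂ‖ ≤ ‖d‖ / (m + 1) := by
      intro m
      obtain ⟨n, hn⟩ := he (i₀, m)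
      obtain ⟨y, hy, hy'⟩ := hy2 (st n) (e n)
      rw [hn] at hy'
      have hyd : ⟪y, d⟫_ℂ = 0 := by
        refine inner_left_eq_zero_of_span (fun v hv => ?_) hy
        obtain ⟨j, hj, rfl⟩ := hv
        exact hd _ (Set.mem_iUnion.2 ⟨n + 1, by rw [st_succ]; exact_mod_cast hj⟩)
      have h1 : ⟪x i₀, d⟫_ℂ = ⟪x i₀ - y, d⟫_ℂ := by rw [inner_sub_left, hyd, sub_zero]
      calc ‖⟪x i₀, d⟫_ℂ‖ = ‖⟪x i₀ - y, d⟫_ℂ‖ := by rw [h1]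
        _ ≤ ‖x i₀ - y‖ * ‖d‖ := norm_inner_le_norm _ _
        _ ≤ (1 / (m + 1)) * ‖d‖ := by
            have := hy'.le
            gcongr
        _ = ‖d‖ / (m + 1) := by ring
    by_contra hne
    have hpos : 0 < ‖⟪x i₀, d⟫_ℂ‖ := norm_pos_iff.mpr hne
    obtain ⟨m, hm⟩ := exists_nat_gt (‖d‖ / ‖⟪x i₀, d⟫_ℂ‖)
    have h2 : ‖d‖ / (m + 1) < ‖⟪x i₀, d⟫_ℂ‖ := by
      rw [div_lt_iff₀ (by positivity)]
      rw [div_lt_iff₀ hpos] at hm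
      nlinarith [hpos]
    exact absurd (key m) (not_le.2 h2)
  · intro d hd i₀
    have hcompl : ∀ n, ((st n).1 : Set I) ⊆ (⋃ n, ((st n).2 : Set I))ᶜ := by
      intro n j hj hmem
      obtain ⟨_, ⟨k, rfl⟩, hk⟩ := hmem
      rcases le_total n k with h | h
      · exact Finset.disjoint_left.1 (st_disj k) (mono1 h hj) hk
      · exact Finset.disjoint_left.1 (st_disj n) hj (mono2 h hk)
    have key : ∀ m : ℕ, ‖⟪x i₀, d⟫_ℂ‖ ≤ ‖d‖ / (m + 1) := by
      intro m
      obtain ⟨n, hn⟩ := he (i₀, m)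
      obtain ⟨y, hy, hy'⟩ := hy1 (st n) (e n)
      rw [hn] at hy'
      have hyd : ⟪y, d⟫_ℂ = 0 := by
        refine inner_left_eq_zero_of_span (fun v hv => ?_) hy
        obtain ⟨j, hj, rfl⟩ := hv
        exact hd _ (hcompl (n + 1) (by rw [st_succ]; exact_mod_cast hj))
      have h1 : ⟪x i₀, d⟫_ℂ = ⟪x i₀ - y, d⟫_ℂ := by rw [inner_sub_left, hyd, sub_zero]
      calc ‖⟪x i₀, d⟫_ℂ‖ = ‖⟪x i₀ - y, d⟫_ℂ‖ := by rw [h1]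
        _ ≤ ‖x i₀ - y‖ * ‖d‖ := norm_inner_le_norm _ _
        _ ≤ (1 / (m + 1)) * ‖d‖ := by
            have := hy'.le
            gcongr
        _ = ‖d‖ / (m + 1) := by ring
    by_contra hne
    have hpos : 0 < ‖⟪x i₀, d⟫_ℂ‖ := norm_pos_iff.mpr hne
    obtain ⟨m, hm⟩ := exists_nat_gt (‖d‖ / ‖⟪x i₀, d⟫_ℂ‖)
    have h2 : ‖d‖ / (m + 1) < ‖⟪x i₀, d⟫_ℂ‖ := by
      rw [div_lt_iff₀ (by positivity)]
      rw [div_lt_iff₀ hpos] at hm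
      nlinarith [hpos]
    exact absurd (key m) (not_le.2 h2)

section Kernel

variable [DecidableEq I] (f : I → H) {B : ℝ} (hB : IsBessel f B) (hB0 : 0 < B)

/-- The kernel of the synthesis operator. -/
private def relKer : Submodule ℂ (lp (fun _ : I => ℂ) 2) :=
  LinearMap.ker (synthesis f hB hB0).toLinearMap

private instance relKer_complete : CompleteSpace (relKer f hB hB0) := by
  unfold relKer
  infer_instance

private lemma relKer_mem_iff (c : lp (fun _ : I => ℂ) 2) :
    c ∈ relKer f hB hB0 ↔ (∑' i, c i • f i) = 0 := by
  rw [relKer, LinearMap.mem_ker, ContinuousLinearMap.coe_coe]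
  rw [show (synthesis f hB hB0) c = ∑' i, c i • f i from rfl]

/-- Projections of the canonical basis vectors onto the kernel. -/
private def kerVec (i : I) : relKer f hB hB0 :=
  orthogonalProjection (relKer f hB hB0) (lp.single 2 i 1)

private lemma inner_kerVec (i : I) (d : relKer f hB hB0) :
    ⟪kerVec f hB hB0 i, d⟫_ℂ = (d : ∀ _ : I, ℂ) i := by
  have h := Submodule.starProjection_inner_eq_zero (K := relKer f hB hB0)
    (lp.single 2 i (1 : ℂ)) (d : lp (fun _ : I => ℂ) 2) d.2
  rw [inner_sub_left, sub_eq_zero] at h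
  show ⟪(orthogonalProjection (relKer f hB hB0)) (lp.single 2 i 1), d⟫_ℂ = (d : ∀ _ : I, ℂ) i
  rw [Submodule.coe_inner, ← Submodule.starProjection_apply, ← h, lp.inner_single_left]
  simp

/-- Cofinite totality: an element of the kernel whose coordinates vanish off a
finite set is zero. -/
private lemma kerVec_total (hli : LinearIndependent ℂ f) (S : Finset I) (d : relKer f hB hB0)
    (hd : ∀ i, i ∉ S → (d : ∀ _ : I, ℂ) i = 0) : d = 0 := by
  have hT : synthesis f hB hB0 (d : lp (fun _ : I => ℂ) 2) = 0 := d.2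
  rw [synthesis_apply] at hT
  have hsum : ∑' i, (d : ∀ _ : I, ℂ) i • f i = ∑ i ∈ S, (d : ∀ _ : I, ℂ) i • f i :=
    tsum_eq_sum (fun i hi => by rw [hd i hi, zero_smul])
  rw [hsum] at hT
  have hzero : ∀ i ∈ S, (d : ∀ _ : I, ℂ) i = 0 := linearIndependent_iff'.1 hli S _ hT
  have : (d : lp (fun _ : I => ℂ) 2) = 0 := by
    ext i
    by_cases hi : i ∈ S
    · exact hzero i hi
    · exact hd i hi
  exact Subtype.ext this

private lemma kerVec_approx (hli : LinearIndependent ℂ f) (S : Finset I) (z : relKer f hB hB0)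
    (ε : ℝ) (hε : 0 < ε) :
    ∃ G : Finset I, (∀ j ∈ G, j ∉ S) ∧
      ∃ y ∈ span ℂ (kerVec f hB hB0 '' (G : Set I)), ‖z - y‖ < ε := by
  set K := span ℂ (kerVec f hB hB0 '' ((S : Set I)ᶜ)) with hK
  have horth : Kᗮ = ⊥ := by
    rw [eq_bot_iff]
    intro d hd
    have hvan : ∀ i, i ∉ S → (d : ∀ _ : I, ℂ) i = 0 := by
      intro i hi
      rw [← inner_kerVec f hB hB0 i d]
      exact (Submodule.mem_orthogonal K d).1 hd _
        (subset_span ⟨i, by simpa using hi, rfl⟩)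
    simpa using kerVec_total f hB hB0 hli S d hvan
  have hclos : K.topologicalClosure = ⊤ := Submodule.topologicalClosure_eq_top_iff.2 horth
  haveI : Nonempty (relKer f hB hB0) := ⟨0⟩
  have hz : z ∈ closure (K : Set (relKer f hB hB0)) := by
    have : z ∈ K.topologicalClosure := by rw [hclos]; trivial
    rwa [← Submodule.topologicalClosure_coe]
  obtain ⟨y, hy, hyd⟩ := Metric.mem_closure_iff.1 hz ε hε
  rw [dist_eq_norm] at hyd
  obtain ⟨cc, hsupp, hsum⟩ := Submodule.mem_span_set.1 hy
  have hchoice : ∀ v ∈ cc.support, ∃ j : I, j ∉ S ∧ kerVec f hB hB0 j = v := by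
    intro v hv
    obtain ⟨j, hj, rfl⟩ := hsupp hv
    exact ⟨j, by simpa using hj, rfl⟩
  choose jf hjS hjx using hchoice
  refine ⟨cc.support.attach.image (fun v => jf v.1 v.2), ?_, y, ?_, hyd⟩
  · intro j hj
    obtain ⟨v, _, rfl⟩ := Finset.mem_image.1 hj
    exact hjS _ _
  · rw [← hsum, Finsupp.sum]
    refine Submodule.sum_mem _ fun v hv => Submodule.smul_mem _ _ (subset_span ?_)
    refine ⟨jf v hv, ?_, hjx v hv⟩
    exact Finset.mem_coe.2 (Finset.mem_image.2 ⟨⟨v, hv⟩, Finset.mem_attach _ _, rfl⟩)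

/-- A subfamily indexed by `P` is ω-independent provided every kernel element
vanishing on `Pᶜ` vanishes everywhere. -/
private lemma omegaIndep_of_total (P : Set I)
    (htot : ∀ d : relKer f hB hB0, (∀ i ∈ Pᶜ, ⟪kerVec f hB hB0 i, d⟫_ℂ = 0) →
      ∀ i, ⟪kerVec f hB hB0 i, d⟫_ℂ = 0) :
    IsOmegaIndep (fun i : P => f (i : I)) := by
  classical
  intro c hc hsum i
  set ct : I → ℂ := fun j => if h : j ∈ P then c ⟨j, h⟩ else 0 with hct
  have hvanish : ∀ j ∉ Set.range (Subtype.val : P → I), ct j = 0 := by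
    intro j hj
    rw [Subtype.range_coe] at hj
    simp [hct, hj]
  have hsq : Summable fun j => ‖ct j‖ ^ 2 := by
    have hv : ∀ j ∉ Set.range (Subtype.val : P → I), ‖ct j‖ ^ 2 = 0 := by
      intro j hj; rw [hvanish j hj]; simp
    refine (Function.Injective.summable_iff Subtype.val_injective hv).1 ?_
    have : ((fun j => ‖ct j‖ ^ 2) ∘ (Subtype.val : P → I)) = fun i : P => ‖c i‖ ^ 2 := by
      funext i
      simp only [Function.comp_apply, hct]
      rw [dif_pos i.2]
    rwa [this]
  have hmem : Memℓp ct 2 := by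
    apply memℓp_gen
    have : (fun j => ‖ct j‖ ^ ((2 : ℝ≥0∞).toReal)) = fun j => ‖ct j‖ ^ 2 := by
      funext j
      rw [show ((2 : ℝ≥0∞).toReal) = (2 : ℝ) by norm_num, ← Real.rpow_natCast ‖ct j‖ 2]
      norm_num
    rwa [this]
  set cl : lp (fun _ : I => ℂ) 2 := ⟨ct, hmem⟩ with hcl
  have hrel : HasSum (fun j : I => ct j • f j) 0 := by
    have hv : ∀ j ∉ Set.range (Subtype.val : P → I), ct j • f j = 0 := by
      intro j hj; rw [hvanish j hj, zero_smul]
    refine (Function.Injective.hasSum_iff Subtype.val_injective hv).1 ?_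
    have : ((fun j : I => ct j • f j) ∘ (Subtype.val : P → I))
        = fun i : P => c i • f (i : I) := by
      funext i
      simp only [Function.comp_apply, hct]
      rw [dif_pos i.2]
    rwa [this]
  have hker : cl ∈ relKer f hB hB0 := by
    rw [relKer_mem_iff]
    exact hrel.tsum_eq
  set d : relKer f hB hB0 := ⟨cl, hker⟩ with hd
  have hz : ∀ j ∈ Pᶜ, ⟪kerVec f hB hB0 j, d⟫_ℂ = 0 := by
    intro j hj
    rw [inner_kerVec]
    show ct j = 0
    exact dif_neg hj
  have := htot d hz i
  rw [inner_kerVec] at this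
  have hci : ct (i : I) = c i := by simp [hct, dif_pos i.2]
  rw [show ((d : ∀ _ : I, ℂ) (i : I)) = ct (i : I) from rfl, hci] at this
  exact this

end Kernel

end OmegaIndepAux

theorem stmt6 [SeparableSpace H] {I : Type} [Countable I] (f : I → H)
    (hnorm : ∀ i, ‖f i‖ = 1) (hB : ∃ B > 0, IsBessel f B)
    (hli : LinearIndependent ℂ f) :
    ∃ I1 I2 : Set I, I1 ∪ I2 = Set.univ ∧ I1 ∩ I2 = ∅ ∧
      IsOmegaIndep (fun i : I1 => f (i : I)) ∧
      IsOmegaIndep (fun i : I2 => f (i : I)) := by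
  classical
  obtain ⟨B, hB0, hb⟩ := hB
  rcases isEmpty_or_nonempty I with hI | hI
  · refine ⟨Set.univ, ∅, by simp, by simp, ?_, ?_⟩ <;>
      exact fun c _ _ i => (IsEmpty.false (i : I)).elim
  · obtain ⟨A, hA1, hA2⟩ := abstract_partition (kerVec f hb hB0)
      (fun S z ε hε => kerVec_approx f hb hB0 hli S z ε hε)
    refine ⟨A, Aᶜ, Set.union_compl_self A, by simp, ?_, ?_⟩
    · exact omegaIndep_of_total f hb hB0 A hA2
    · refine omegaIndep_of_total f hb hB0 Aᶜ ?_
      rw [compl_compl]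
      exact hA1
end
end

section
/- Let {f_i}_{i=1}^∞ be a Bessel sequence with bound B in H, and let (a_i) ∈ ℓ² satisfy Σ_{i=1}^∞ a_i f_i = 0. For a partition of ℕ into consecutive blocks, let g_k = Σ_{i ∈ first k blocks} a_i f_i = −Σ_{i ∈ remaining blocks} a_i f_i, and let Q_k be the orthogonal projection onto the span of {f_i : i in the first k blocks}. Then ‖g_k‖ ≤ (Σ_{i in remaining blocks} |a_i|²)^{1/2} · (Σ_{i in remaining blocks} ‖Q_k f_i‖²)^{1/2}. -/
open scoped InnerProductSpace
open Submodule Topology TopologicalSpace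

noncomputable section

variable {H : Type} [NormedAddCommGroup H] [InnerProductSpace ℂ H] [CompleteSpace H]

lemma l2_summable_mul {ι : Type*} (u v : ι → ℝ) (hu : ∀ i, 0 ≤ u i) (hv : ∀ i, 0 ≤ v i)
    (h1 : Summable fun i => u i ^ 2) (h2 : Summable fun i => v i ^ 2) :
    Summable fun i => u i * v i := by
  apply Summable.of_nonneg_of_le (fun i => mul_nonneg (hu i) (hv i))
    (fun i => ?_) ((h1.add h2).div_const 2)
  nlinarith [sq_nonneg (u i - v i)]

lemma l2_cauchy_schwarz {ι : Type*} (u v : ι → ℝ) (hu : ∀ i, 0 ≤ u i) (hv : ∀ i, 0 ≤ v i)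
    (h1 : Summable fun i => u i ^ 2) (h2 : Summable fun i => v i ^ 2) :
    ∑' i, u i * v i ≤ Real.sqrt (∑' i, u i ^ 2) * Real.sqrt (∑' i, v i ^ 2) := by
  refine Summable.tsum_le_of_sum_le (l2_summable_mul u v hu hv h1 h2) fun s => ?_
  calc ∑ i ∈ s, u i * v i
      ≤ Real.sqrt (∑ i ∈ s, u i ^ 2) * Real.sqrt (∑ i ∈ s, v i ^ 2) :=
        Real.sum_mul_le_sqrt_mul_sqrt s u v
    _ ≤ Real.sqrt (∑' i, u i ^ 2) * Real.sqrt (∑' i, v i ^ 2) := by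
        gcongr
        · exact Summable.sum_le_tsum s (fun i _ => sq_nonneg _) h1
        · exact Summable.sum_le_tsum s (fun i _ => sq_nonneg _) h2

theorem stmt9 [SeparableSpace H] (f : ℕ → H) (B : ℝ) (hB : 0 < B)
    (hf : IsBessel f B)
    (a : ℕ → ℂ) (ha2 : Summable fun i => ‖a i‖ ^ 2)
    (hsum : HasSum (fun i => a i • f i) 0)
    (n : ℕ → ℕ) (hmono : StrictMono n) (h0 : n 0 = 0)
    (Q : ℕ → H →L[ℂ] H)
    (hmem : ∀ k x, Q k x ∈ span ℂ (f '' {i | i < n k}))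
    (hfix : ∀ k x, x ∈ span ℂ (f '' {i | i < n k}) → Q k x = x)
    (hsa : ∀ k x y, ⟪Q k x, y⟫_ℂ = ⟪x, Q k y⟫_ℂ)
    (k : ℕ) :
    ‖∑ i ∈ Finset.range (n k), a i • f i‖ ≤
      Real.sqrt (∑' i : {i : ℕ // n k ≤ i}, ‖a (i : ℕ)‖ ^ 2) *
      Real.sqrt (∑' i : {i : ℕ // n k ≤ i}, ‖Q k (f (i : ℕ))‖ ^ 2) := by
  classical
  set g : H := ∑ i ∈ Finset.range (n k), a i • f i with hg_def
  set K : Submodule ℂ H := span ℂ (f '' {i | i < n k}) with hK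
  have hgK : g ∈ K := by
    apply Submodule.sum_mem
    intro i hi
    exact Submodule.smul_mem _ _ (subset_span ⟨i, Finset.mem_range.mp hi, rfl⟩)
  have hQg : Q k g = g := hfix k g hgK
  -- the tail sums to -g
  have htail : HasSum (fun i : {i : ℕ // n k ≤ i} => a (i : ℕ) • f (i : ℕ)) (-g) := by
    have h1 : HasSum (fun i : {x // x ∉ Finset.range (n k)} => a (i : ℕ) • f (i : ℕ)) (-g) := by
      refine ((Finset.range (n k)).hasSum_compl_iff (f := fun i => a i • f i) (a := -g)).mpr ?_
      simpa [hg_def] using hsum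
    let e : {x // x ∉ Finset.range (n k)} ≃ {i : ℕ // n k ≤ i} :=
      Equiv.subtypeEquivRight (fun i => by simp [Finset.mem_range, not_lt])
    have heq : ((fun i : {i : ℕ // n k ≤ i} => a (i : ℕ) • f (i : ℕ)) ∘ e) =
        fun i : {x // x ∉ Finset.range (n k)} => a (i : ℕ) • f (i : ℕ) := by
      funext i
      simp [e, Function.comp, Equiv.subtypeEquivRight_apply]
    exact e.hasSum_iff.mp (heq ▸ h1)
  have hinner : HasSum (fun i : {i : ℕ // n k ≤ i} => ⟪g, a (i : ℕ) • f (i : ℕ)⟫_ℂ)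
      ⟪g, -g⟫_ℂ := htail.mapL (innerSL ℂ g)
  -- finite-dimensional span and orthonormal basis
  haveI hfinK : FiniteDimensional ℂ K := by
    apply Module.Finite.span_of_finite
    exact (Set.finite_Iio (n k)).image f
  let b := stdOrthonormalBasis ℂ K
  -- key formula for ‖Q k (f i)‖²
  have hQnorm : ∀ i : ℕ, ‖Q k (f i)‖ ^ 2 = ∑ m, ‖⟪((b m : K) : H), f i⟫_ℂ‖ ^ 2 := by
    intro i
    set y : K := ⟨Q k (f i), hmem k (f i)⟩ with hy
    have h1 : ‖Q k (f i)‖ = ‖y‖ := rfl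
    have h2 : ‖y‖ = ‖b.repr y‖ := (b.repr.norm_map y).symm
    have h3 : ‖b.repr y‖ ^ 2 = ∑ m, ‖b.repr y m‖ ^ 2 := by
      rw [EuclideanSpace.norm_eq]
      rw [Real.sq_sqrt (Finset.sum_nonneg fun _ _ => sq_nonneg _)]
    rw [h1, h2, h3]
    congr 1
    ext m
    have h4 : b.repr y m = ⟪b m, y⟫_ℂ := b.repr_apply_apply y m
    have h5 : ⟪b m, y⟫_ℂ = ⟪((b m : K) : H), Q k (f i)⟫_ℂ := rfl
    have h6 : Q k ((b m : K) : H) = ((b m : K) : H) := hfix k _ (b m).2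
    have h7 : ⟪((b m : K) : H), Q k (f i)⟫_ℂ = ⟪((b m : K) : H), f i⟫_ℂ := by
      rw [← hsa k, h6]
    rw [h4, h5, h7]
  -- summability of ‖Q k (f i)‖²
  have hQsumm : Summable fun i : ℕ => ‖Q k (f i)‖ ^ 2 := by
    have : ∀ m, Summable fun i : ℕ => ‖⟪((b m : K) : H), f i⟫_ℂ‖ ^ 2 := by
      intro m
      apply summable_of_sum_le (c := B * ‖((b m : K) : H)‖ ^ 2) (fun i => sq_nonneg _)
      intro s
      exact hf _ s
    have hsum' : Summable fun i : ℕ => ∑ m, ‖⟪((b m : K) : H), f i⟫_ℂ‖ ^ 2 :=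
      summable_sum fun m _ => this m
    exact hsum'.congr fun i => (hQnorm i).symm
  have hQsubt : Summable fun i : {i : ℕ // n k ≤ i} => ‖Q k (f (i : ℕ))‖ ^ 2 :=
    hQsumm.subtype _
  have ha2subt : Summable fun i : {i : ℕ // n k ≤ i} => ‖a (i : ℕ)‖ ^ 2 :=
    ha2.subtype _
  -- pointwise bound on the inner products
  set u : {i : ℕ // n k ≤ i} → ℝ := fun i => ‖a (i : ℕ)‖ with hu_def
  set v : {i : ℕ // n k ≤ i} → ℝ := fun i => ‖Q k (f (i : ℕ))‖ with hv_def
  have hbound : ∀ i : {i : ℕ // n k ≤ i},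
      ‖⟪g, a (i : ℕ) • f (i : ℕ)⟫_ℂ‖ ≤ ‖g‖ * (u i * v i) := by
    intro i
    have h1 : ⟪g, f (i : ℕ)⟫_ℂ = ⟪g, Q k (f (i : ℕ))⟫_ℂ := by
      conv_lhs => rw [← hQg]
      rw [hsa k]
    rw [inner_smul_right, norm_mul, h1]
    calc ‖a (i : ℕ)‖ * ‖⟪g, Q k (f (i : ℕ))⟫_ℂ‖
        ≤ ‖a (i : ℕ)‖ * (‖g‖ * ‖Q k (f (i : ℕ))‖) := by
          gcongr
          exact norm_inner_le_norm _ _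
      _ = ‖g‖ * (u i * v i) := by ring
  have huv : Summable fun i => u i * v i :=
    l2_summable_mul u v (fun i => norm_nonneg _) (fun i => norm_nonneg _) ha2subt hQsubt
  -- main estimate
  have hnorm : ‖⟪g, -g⟫_ℂ‖ ≤ ‖g‖ * ∑' i, u i * v i := by
    have hb : HasSum (fun i => ‖g‖ * (u i * v i)) (‖g‖ * ∑' i, u i * v i) :=
      huv.hasSum.mul_left _
    rw [← hinner.tsum_eq]
    exact tsum_of_norm_bounded hb hbound
  have hlhs : ‖⟪g, -g⟫_ℂ‖ = ‖g‖ ^ 2 := by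
    rw [inner_neg_right, inner_self_eq_norm_sq_to_K, norm_neg]
    simp [← Complex.ofReal_pow, sq_abs]
  have hcs : ∑' i, u i * v i ≤
      Real.sqrt (∑' i, u i ^ 2) * Real.sqrt (∑' i, v i ^ 2) :=
    l2_cauchy_schwarz u v (fun i => norm_nonneg _) (fun i => norm_nonneg _) ha2subt hQsubt
  have key : ‖g‖ ^ 2 ≤ ‖g‖ * (Real.sqrt (∑' i, u i ^ 2) * Real.sqrt (∑' i, v i ^ 2)) := by
    rw [← hlhs]
    calc ‖⟪g, -g⟫_ℂ‖ ≤ ‖g‖ * ∑' i, u i * v i := hnorm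
      _ ≤ ‖g‖ * (Real.sqrt (∑' i, u i ^ 2) * Real.sqrt (∑' i, v i ^ 2)) := by
          gcongr
  rcases eq_or_lt_of_le (norm_nonneg g) with hg0 | hg0
  · rw [← hg0]
    positivity
  · have := key
    rw [sq] at this
    exact le_of_mul_le_mul_left (by linarith [this]) hg0
end
end

section
/- Let {f_i}_{i=1}^∞ be a finitely linearly independent Bessel sequence in H and (a_i) ∈ ℓ² with Σ a_i f_i = 0. Suppose ℕ is partitioned into finite consecutive blocks T_1, T_2, … such that for each k, Σ_{i ∈ T_{k+1} ∪ T_{k+2} ∪ …} ‖Q_k f_i‖² < (ε/2^{2k}) δ_k, where Q_k is the orthogonal projection onto span{f_i : i ∈ T_1 ∪ … ∪ T_k}, δ_k > 0 is a lower Riesz bound for the finite family {f_i : i ∈ T_1 ∪ … ∪ T_k} (i.e., δ_k Σ|c_i|² ≤ ‖Σ c_i f_i‖² over this finite index set), and 0 < ε ≤ 1. Then a_i = 0 for all i. -/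
open scoped InnerProductSpace
open Submodule Topology TopologicalSpace

noncomputable section

variable {H : Type} [NormedAddCommGroup H] [InnerProductSpace ℂ H] [CompleteSpace H]

lemma tsum_mul_le_sqrt_mul_sqrt' {ι : Type*} (x y : ι → ℝ) (hx : ∀ i, 0 ≤ x i)
    (hy : ∀ i, 0 ≤ y i) (hx2 : Summable fun i => x i ^ 2)
    (hy2 : Summable fun i => y i ^ 2) :
    ∑' i, x i * y i ≤ Real.sqrt (∑' i, x i ^ 2) * Real.sqrt (∑' i, y i ^ 2) := by
  have hprod : Summable fun i => x i * y i := by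
    refine Summable.of_nonneg_of_le (fun i => mul_nonneg (hx i) (hy i)) (fun i => ?_)
      ((hx2.add hy2).div_const 2)
    nlinarith [sq_nonneg (x i - y i)]
  refine Summable.tsum_le_of_sum_le hprod fun s => ?_
  calc ∑ i ∈ s, x i * y i
      ≤ Real.sqrt (∑ i ∈ s, x i ^ 2) * Real.sqrt (∑ i ∈ s, y i ^ 2) :=
        Real.sum_mul_le_sqrt_mul_sqrt s x y
    _ ≤ _ := by
        gcongr
        · exact Summable.sum_le_tsum s (fun i _ => sq_nonneg _) hx2
        · exact Summable.sum_le_tsum s (fun i _ => sq_nonneg _) hy2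

theorem stmt10 [SeparableSpace H] (f : ℕ → H) (B : ℝ) (hB : 0 < B)
    (hf : IsBessel f B) (hli : LinearIndependent ℂ f)
    (a : ℕ → ℂ) (ha2 : Summable fun i => ‖a i‖ ^ 2)
    (hsum : HasSum (fun i => a i • f i) 0)
    (n : ℕ → ℕ) (hmono : StrictMono n) (h0 : n 0 = 0)
    (Q : ℕ → H →L[ℂ] H)
    (hmem : ∀ k x, Q k x ∈ span ℂ (f '' {i | i < n k}))
    (hfix : ∀ k x, x ∈ span ℂ (f '' {i | i < n k}) → Q k x = x)
    (hsa : ∀ k x y, ⟪Q k x, y⟫_ℂ = ⟪x, Q k y⟫_ℂ)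
    (δ : ℕ → ℝ) (hδpos : ∀ k, 0 < δ k)
    (hδ : ∀ k (c : ℕ → ℂ),
      δ k * ∑ i ∈ Finset.range (n k), ‖c i‖ ^ 2 ≤
        ‖∑ i ∈ Finset.range (n k), c i • f i‖ ^ 2)
    (ε : ℝ) (hε : 0 < ε) (hε1 : ε ≤ 1)
    (hQ : ∀ k, (∑' i : {i : ℕ // n k ≤ i}, ‖Q k (f (i : ℕ))‖ ^ 2)
      < ε / 2 ^ (2 * k) * δ k) :
    ∀ i, a i = 0 := by
  set S := ∑' i, ‖a i‖ ^ 2 with hSdef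
  have hS0 : 0 ≤ S := tsum_nonneg fun i => sq_nonneg _
  have hBess : ∀ g : H, Summable fun i => ‖⟪g, f i⟫_ℂ‖ ^ 2 := fun g =>
    summable_of_sum_range_le (fun i => sq_nonneg _) (fun m => hf g (Finset.range m))
  have key : ∀ k, ∑ i ∈ Finset.range (n k), ‖a i‖ ^ 2 ≤ S * (ε / 2 ^ (2 * k)) := by
    intro k
    set W := span ℂ (f '' {i | i < n k}) with hWdef
    haveI hWfin : FiniteDimensional ℂ W :=
      FiniteDimensional.span_of_finite ℂ ((Set.finite_Iio (n k)).image f)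
    set e := stdOrthonormalBasis ℂ W with hedef
    -- norm formula on W
    have hnorm : ∀ g : H, (hg : g ∈ W) → ‖g‖ ^ 2 = ∑ j, ‖⟪((e j : H)), g⟫_ℂ‖ ^ 2 := by
      intro g hg
      have h1 : ‖g‖ = ‖e.repr ⟨g, hg⟩‖ := by
        rw [e.repr.norm_map ⟨g, hg⟩]; rfl
      rw [h1, EuclideanSpace.norm_eq]
      rw [Real.sq_sqrt (Finset.sum_nonneg fun j _ => sq_nonneg _)]
      refine Finset.sum_congr rfl fun j _ => ?_
      rw [e.repr_apply_apply]
      rfl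
    have hQnorm : ∀ i, ‖Q k (f i)‖ ^ 2 = ∑ j, ‖⟪((e j : H)), f i⟫_ℂ‖ ^ 2 := by
      intro i
      rw [hnorm _ (hmem k (f i))]
      refine Finset.sum_congr rfl fun j _ => ?_
      congr 2
      rw [← hsa k (e j : H) (f i), hfix k (e j : H) (e j).2]
    have hQsq : Summable fun i => ‖Q k (f i)‖ ^ 2 := by
      rw [show (fun i => ‖Q k (f i)‖ ^ 2)
          = fun i => ∑ j, ‖⟪((e j : H)), f i⟫_ℂ‖ ^ 2 from funext hQnorm]
      exact summable_sum fun j _ => hBess _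
    have hprod : Summable fun i => ‖a i‖ * ‖Q k (f i)‖ := by
      refine Summable.of_nonneg_of_le (fun i => mul_nonneg (norm_nonneg _) (norm_nonneg _))
        (fun i => ?_) ((ha2.add hQsq).div_const 2)
      nlinarith [sq_nonneg (‖a i‖ - ‖Q k (f i)‖)]
    have hg : Summable fun i => a i • Q k (f i) := by
      apply Summable.of_norm
      simpa [norm_smul] using hprod
    have hg0 : HasSum (fun i => a i • Q k (f i)) 0 := by
      have h := (Q k).hasSum hsum
      simpa using h
    have hsplit := Summable.sum_add_tsum_compl (s := Finset.range (n k)) hg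
    rw [hg0.tsum_eq] at hsplit
    have hfixsum : ∑ i ∈ Finset.range (n k), a i • Q k (f i)
        = ∑ i ∈ Finset.range (n k), a i • f i := by
      refine Finset.sum_congr rfl fun i hi => ?_
      rw [hfix k (f i) (subset_span ⟨i, Finset.mem_range.mp hi, rfl⟩)]
    rw [hfixsum] at hsplit
    have hFeq : ∑ i ∈ Finset.range (n k), a i • f i
        = -(∑' (x : ↑((↑(Finset.range (n k)) : Set ℕ))ᶜ), a x • Q k (f (x : ℕ))) :=
      eq_neg_of_add_eq_zero_left hsplit
    -- tail bound
    have hsetEq : ((↑(Finset.range (n k)) : Set ℕ))ᶜ = {i : ℕ | n k ≤ i} := by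
      ext i; simp [not_lt]
    have hQtail : ∑' (i : ↑((↑(Finset.range (n k)) : Set ℕ))ᶜ), ‖Q k (f (i : ℕ))‖ ^ 2
        ≤ ε / 2 ^ (2 * k) * δ k := by
      rw [hsetEq]
      exact (hQ k).le
    have hTnn : (0:ℝ) ≤ ε / 2 ^ (2 * k) * δ k := mul_nonneg (div_nonneg hε.le (by positivity)) (hδpos k).le
    have htail : ‖∑' (x : ↑((↑(Finset.range (n k)) : Set ℕ))ᶜ), a x • Q k (f (x : ℕ))‖
        ≤ Real.sqrt S * Real.sqrt (ε / 2 ^ (2 * k) * δ k) := by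
      have h1 : ‖∑' (x : ↑((↑(Finset.range (n k)) : Set ℕ))ᶜ), a x • Q k (f (x : ℕ))‖
          ≤ ∑' (x : ↑((↑(Finset.range (n k)) : Set ℕ))ᶜ), ‖a x‖ * ‖Q k (f (x : ℕ))‖ := by
        have h2 := norm_tsum_le_tsum_norm
          (f := fun (x : ↑((↑(Finset.range (n k)) : Set ℕ))ᶜ) => a x • Q k (f (x : ℕ)))
          (by have h := hprod.subtype ((↑(Finset.range (n k)) : Set ℕ)ᶜ); simp only [norm_smul]; exact h)
        simpa [norm_smul] using h2
      refine h1.trans ?_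
      have hCS := tsum_mul_le_sqrt_mul_sqrt'
        (fun (x : ↑((↑(Finset.range (n k)) : Set ℕ))ᶜ) => ‖a x‖)
        (fun x => ‖Q k (f (x : ℕ))‖) (fun _ => norm_nonneg _) (fun _ => norm_nonneg _)
        (ha2.subtype _) (hQsq.subtype _)
      refine hCS.trans ?_
      refine mul_le_mul (Real.sqrt_le_sqrt ?_) (Real.sqrt_le_sqrt ?_)
        (Real.sqrt_nonneg _) (Real.sqrt_nonneg _)
      · exact Summable.tsum_subtype_le _ _ (fun i => sq_nonneg _) ha2
      · exact hQtail
    have hnormF : ‖∑ i ∈ Finset.range (n k), a i • f i‖ ^ 2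
        ≤ S * (ε / 2 ^ (2 * k) * δ k) := by
      rw [hFeq, norm_neg]
      calc ‖∑' (x : ↑((↑(Finset.range (n k)) : Set ℕ))ᶜ), a x • Q k (f (x : ℕ))‖ ^ 2
          ≤ (Real.sqrt S * Real.sqrt (ε / 2 ^ (2 * k) * δ k)) ^ 2 := by
            exact pow_le_pow_left₀ (norm_nonneg _) htail 2
        _ = S * (ε / 2 ^ (2 * k) * δ k) := by
            rw [mul_pow, Real.sq_sqrt hS0, Real.sq_sqrt hTnn]
    have := (hδ k a).trans hnormF
    have h3 : δ k * ∑ i ∈ Finset.range (n k), ‖a i‖ ^ 2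
        ≤ δ k * (S * (ε / 2 ^ (2 * k))) := by
      calc δ k * ∑ i ∈ Finset.range (n k), ‖a i‖ ^ 2
          ≤ S * (ε / 2 ^ (2 * k) * δ k) := this
        _ = δ k * (S * (ε / 2 ^ (2 * k))) := by ring
    exact le_of_mul_le_mul_left h3 (hδpos k)
  intro i
  have hev : ∀ k, i + 1 ≤ k → ‖a i‖ ^ 2 ≤ S * ε * (1 / 4 : ℝ) ^ k := by
    intro k hk
    have hik : i < n k := lt_of_lt_of_le (Nat.lt_of_lt_of_le (Nat.lt_succ_self i) hk)
      hmono.le_apply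
    have h1 : ‖a i‖ ^ 2 ≤ ∑ j ∈ Finset.range (n k), ‖a j‖ ^ 2 :=
      Finset.single_le_sum (f := fun j => ‖a j‖ ^ 2) (fun j _ => sq_nonneg _) (Finset.mem_range.mpr hik)
    refine (h1.trans (key k)).trans_eq ?_
    rw [pow_mul]
    norm_num
    rw [one_div, inv_pow, div_eq_mul_inv, mul_assoc]
  have hlim : Filter.Tendsto (fun k : ℕ => S * ε * (1 / 4 : ℝ) ^ k) Filter.atTop (𝓝 0) := by
    have := (tendsto_pow_atTop_nhds_zero_of_lt_one (by norm_num : (0:ℝ) ≤ 1/4)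
      (by norm_num : (1/4 : ℝ) < 1)).const_mul (S * ε)
    simpa using this
  have hle : ‖a i‖ ^ 2 ≤ 0 :=
    ge_of_tendsto hlim (Filter.eventually_atTop.mpr ⟨i + 1, hev⟩)
  have : ‖a i‖ ^ 2 = 0 := le_antisymm hle (sq_nonneg _)
  simpa using this
end
end

section
/- Let {g_i}_{i∈I} be a sequence in H possessing a finite orthogonal decomposition with partition {I_j}_{j=1}^∞ of I into finite sets, and suppose for each j the finite family {g_i}_{i∈I_j} is linearly independent. Then {g_i}_{i∈I} is ω-independent for ℓ₂-sequences: if (c_i) ∈ ℓ²(I) and Σ_{i∈I} c_i g_i = 0, then c = 0. -/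
open scoped InnerProductSpace
open Submodule Topology TopologicalSpace

noncomputable section

variable {H : Type} [NormedAddCommGroup H] [InnerProductSpace ℂ H] [CompleteSpace H]

theorem stmt13 [SeparableSpace H] {I : Type} [Countable I] (g : I → H)
    (Pa : ℕ → Set I) (hpart : ∀ i, ∃! j, i ∈ Pa j) (hfin : ∀ j, (Pa j).Finite)
    (horth : ∀ j k, j ≠ k → ∀ x ∈ span ℂ (g '' Pa j), ∀ y ∈ span ℂ (g '' Pa k),
      ⟪x, y⟫_ℂ = 0)
    (hli : ∀ j, LinearIndependent ℂ (fun i : Pa j => g (i : I))) :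
    IsOmegaIndep g := by
  intro c hc hhs i0
  obtain ⟨j0, hij0, -⟩ := hpart i0
  have key : ∀ k, ∑ i ∈ (hfin k).toFinset, c i • g i = 0 := by
    intro k
    set v := ∑ i ∈ (hfin k).toFinset, c i • g i with hv
    have hvmem : v ∈ span ℂ (g '' Pa k) := by
      apply Submodule.sum_mem
      intro i hi
      exact Submodule.smul_mem _ _
        (Submodule.subset_span ⟨i, (hfin k).mem_toFinset.mp hi, rfl⟩)
    have h1 : HasSum (fun i => ⟪v, c i • g i⟫_ℂ) 0 := by
      have := (innerSL ℂ v).hasSum hhs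
      simpa [inner_smul_right] using this
    have h2 : HasSum (fun i => ⟪v, c i • g i⟫_ℂ)
        (∑ i ∈ (hfin k).toFinset, ⟪v, c i • g i⟫_ℂ) := by
      apply hasSum_sum_of_ne_finset_zero
      intro i hi
      obtain ⟨j, hij, -⟩ := hpart i
      have hjk : j ≠ k := fun h => hi ((hfin k).mem_toFinset.mpr (h ▸ hij))
      have h0 : ⟪v, g i⟫_ℂ = 0 :=
        horth k j (Ne.symm hjk) v hvmem (g i) (Submodule.subset_span ⟨i, hij, rfl⟩)
      simp [inner_smul_right, h0]
    have h3 : ∑ i ∈ (hfin k).toFinset, ⟪v, c i • g i⟫_ℂ = ⟪v, v⟫_ℂ := by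
      rw [hv, inner_sum]
    have hvz : ⟪v, v⟫_ℂ = 0 := by rw [← h3]; exact h2.unique h1
    exact inner_self_eq_zero.mp hvz
  haveI : Fintype (Pa j0) := (hfin j0).fintype
  have hsum' : ∑ i : Pa j0, c (i : I) • g (i : I) = 0 := by
    rw [← key j0]
    exact (Finset.sum_subtype (hfin j0).toFinset
      (fun x => (hfin j0).mem_toFinset) (fun i => c i • g i)).symm
  exact Fintype.linearIndependent_iff.mp (hli j0) (fun i => c (i : I)) hsum' ⟨i0, hij0⟩
end
end
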